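/- Define n_j = ⌊√j⌋ and Q_n as the largest Q with Σ_{j=1}^{Q}(n_j + ⌊n_j^α⌋) ≤ n, for fixed α ∈ (0,1). Then Q_n ≍ n^{2/3}, and n − Σ_{j=1}^{Q_n} n_j = O(n^{(α+2)/3}). -/

import Mathlib

/-- Block lengths `n_j = ⌊√j⌋`. -/
def blockLen (j : ℕ) : ℕ := Nat.sqrt j

/-- Gap lengths `Δ_j = ⌊n_j^α⌋`. -/
noncomputable def gapLen (α : ℝ) (j : ℕ) : ℕ := ⌊(Nat.sqrt j : ℝ) ^ α⌋₊

/-- `N_{Q+1} = Σ_{j=1}^{Q} (n_j + Δ_j)`. -/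
noncomputable def blockSum (α : ℝ) (Q : ℕ) : ℕ :=
  ∑ j ∈ Finset.Icc 1 Q, (blockLen j + gapLen α j)

/-- `Q_n`: the largest `Q` with `Σ_{j=1}^{Q}(n_j + Δ_j) ≤ n`. -/
noncomputable def Qn (α : ℝ) (n : ℕ) : ℕ :=
  Nat.findGreatest (fun Q => blockSum α Q ≤ n) n

lemma blockSum_zero (α : ℝ) : blockSum α 0 = 0 := by simp [blockSum]

lemma gapLen_le_sqrt {α : ℝ} (hα1 : α ≤ 1) {j : ℕ} (hj : 1 ≤ j) :
    gapLen α j ≤ Nat.sqrt j := by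
  have h1 : (1 : ℝ) ≤ (Nat.sqrt j : ℝ) := by
    exact_mod_cast Nat.one_le_iff_ne_zero.2 (by
      have := Nat.sqrt_pos.2 hj; omega)
  have : (Nat.sqrt j : ℝ) ^ α ≤ (Nat.sqrt j : ℝ) ^ (1 : ℝ) :=
    Real.rpow_le_rpow_of_exponent_le h1 hα1
  rw [Real.rpow_one] at this
  calc gapLen α j ≤ ⌊(Nat.sqrt j : ℝ)⌋₊ := Nat.floor_le_floor this
    _ = Nat.sqrt j := Nat.floor_natCast _

lemma blockSum_le {α : ℝ} (hα1 : α ≤ 1) (Q : ℕ) :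
    blockSum α Q ≤ 2 * (Q * Nat.sqrt Q) := by
  have h : ∀ j ∈ Finset.Icc 1 Q, blockLen j + gapLen α j ≤ 2 * Nat.sqrt Q := by
    intro j hj
    simp only [Finset.mem_Icc] at hj
    have h1 : Nat.sqrt j ≤ Nat.sqrt Q := Nat.sqrt_le_sqrt hj.2
    have h2 : gapLen α j ≤ Nat.sqrt j := gapLen_le_sqrt hα1 hj.1
    simp only [blockLen]; omega
  calc blockSum α Q ≤ ∑ _j ∈ Finset.Icc 1 Q, 2 * Nat.sqrt Q :=
        Finset.sum_le_sum h
    _ = Q * (2 * Nat.sqrt Q) := by rw [Finset.sum_const]; simp [Nat.Icc_eq_range']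
    _ = 2 * (Q * Nat.sqrt Q) := by ring

lemma blockSum_ge (α : ℝ) (Q : ℕ) :
    Q / 2 * Nat.sqrt (Q / 2) ≤ blockSum α Q := by
  have hsub : Finset.Icc (Q / 2 + 1) Q ⊆ Finset.Icc 1 Q := by
    intro x hx; simp only [Finset.mem_Icc] at *; omega
  have h1 : ∑ j ∈ Finset.Icc (Q / 2 + 1) Q, blockLen j ≤ blockSum α Q := by
    calc ∑ j ∈ Finset.Icc (Q / 2 + 1) Q, blockLen j
        ≤ ∑ j ∈ Finset.Icc 1 Q, blockLen j :=
          Finset.sum_le_sum_of_subset hsub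
      _ ≤ blockSum α Q := Finset.sum_le_sum (fun j _ => Nat.le_add_right _ _)
  refine le_trans ?_ h1
  have h2 : ∀ j ∈ Finset.Icc (Q / 2 + 1) Q, Nat.sqrt (Q / 2) ≤ blockLen j := by
    intro j hj
    simp only [Finset.mem_Icc] at hj
    exact Nat.sqrt_le_sqrt (by omega)
  calc Q / 2 * Nat.sqrt (Q / 2)
      ≤ (Q - Q / 2) * Nat.sqrt (Q / 2) := by
        have : Q / 2 ≤ Q - Q / 2 := by omega
        exact Nat.mul_le_mul_right _ this
    _ = ∑ _j ∈ Finset.Icc (Q / 2 + 1) Q, Nat.sqrt (Q / 2) := by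
        rw [Finset.sum_const, Nat.card_Icc, smul_eq_mul]
        congr 1; omega
    _ ≤ ∑ j ∈ Finset.Icc (Q / 2 + 1) Q, blockLen j := Finset.sum_le_sum h2

lemma blockSum_ge_real (α : ℝ) {Q : ℕ} (hQ : 16 ≤ Q) :
    (Q : ℝ) * Real.sqrt Q / 16 ≤ (blockSum α Q : ℝ) := by
  have key := blockSum_ge α Q
  have hcast : ((Q / 2 * Nat.sqrt (Q / 2) : ℕ) : ℝ) ≤ (blockSum α Q : ℝ) := by
    exact_mod_cast key
  rw [Nat.cast_mul] at hcast
  refine le_trans ?_ hcast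
  have hQR : (16 : ℝ) ≤ (Q : ℝ) := by exact_mod_cast hQ
  have h1 : (Q : ℝ) / 4 ≤ ((Q / 2 : ℕ) : ℝ) := by
    have : (Q : ℝ) - 1 ≤ 2 * ((Q / 2 : ℕ) : ℝ) := by
      have : Q - 1 ≤ 2 * (Q / 2) := by omega
      calc (Q : ℝ) - 1 ≤ ((Q - 1 : ℕ) : ℝ) := by
            push_cast [Nat.cast_sub (by omega : 1 ≤ Q)]; linarith
        _ ≤ ((2 * (Q / 2) : ℕ) : ℝ) := by exact_mod_cast this
        _ = 2 * ((Q / 2 : ℕ) : ℝ) := by push_cast; ring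
    linarith
  have h2 : Real.sqrt Q / 4 ≤ ((Nat.sqrt (Q / 2) : ℕ) : ℝ) := by
    have ha : Real.sqrt ((Q : ℝ) / 4) ≤ Real.sqrt ((Q / 2 : ℕ) : ℝ) :=
      Real.sqrt_le_sqrt h1
    have hb : Real.sqrt ((Q / 2 : ℕ) : ℝ) ≤ (Nat.sqrt (Q / 2) : ℝ) + 1 :=
      Real.real_sqrt_le_nat_sqrt_succ
    have hc : Real.sqrt ((Q : ℝ) / 4) = Real.sqrt Q / 2 := by
      rw [show (Q : ℝ) / 4 = (Q : ℝ) * (1/2 * (1/2)) by ring,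
        Real.sqrt_mul (Nat.cast_nonneg Q), Real.sqrt_mul_self (by norm_num : (0:ℝ) ≤ 1/2)]
      ring
    have hd : (4 : ℝ) ≤ Real.sqrt Q := by
      have : (4 : ℝ) = Real.sqrt 16 := by
        rw [show (16:ℝ) = 4 ^ 2 by norm_num, Real.sqrt_sq (by norm_num : (0:ℝ) ≤ 4)]
      rw [this]; exact Real.sqrt_le_sqrt hQR
    rw [hc] at ha
    linarith
  have hs : (0:ℝ) ≤ Real.sqrt Q / 4 := by positivity
  calc (Q : ℝ) * Real.sqrt Q / 16 = ((Q:ℝ)/4) * (Real.sqrt Q / 4) := by ring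
    _ ≤ ((Q / 2 : ℕ) : ℝ) * ((Nat.sqrt (Q / 2) : ℕ) : ℝ) :=
        mul_le_mul h1 h2 hs (by positivity)

lemma rpow_base_pow {b : ℝ} (hb : 0 ≤ b) (k : ℕ) (e : ℝ) (m : ℕ)
    (h : (k : ℝ) * e = m) : ((b ^ k : ℝ)) ^ e = b ^ m := by
  rw [← Real.rpow_natCast b k, ← Real.rpow_mul hb, h, Real.rpow_natCast]

lemma gapLen_le_rpow {α : ℝ} (hα0 : 0 ≤ α) {j M : ℕ} (hjM : j ≤ M) :
    (gapLen α j : ℝ) ≤ (M : ℝ) ^ (α / 2) := by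
  have h1 : (gapLen α j : ℝ) ≤ (Nat.sqrt j : ℝ) ^ α :=
    Nat.floor_le (Real.rpow_nonneg (Nat.cast_nonneg _) _)
  have h2 : (Nat.sqrt j : ℝ) ≤ Real.sqrt M := by
    calc (Nat.sqrt j : ℝ) ≤ Real.sqrt j := Real.nat_sqrt_le_real_sqrt
      _ ≤ Real.sqrt M := Real.sqrt_le_sqrt (by exact_mod_cast hjM)
  have h3 : (Nat.sqrt j : ℝ) ^ α ≤ (Real.sqrt M) ^ α :=
    Real.rpow_le_rpow (Nat.cast_nonneg _) h2 hα0
  have h4 : (Real.sqrt M) ^ α = (M : ℝ) ^ (α / 2) := by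
    rw [Real.sqrt_eq_rpow, ← Real.rpow_mul (Nat.cast_nonneg M)]
    ring_nf
  linarith [h1, h3, h4.le, h4.ge]


set_option maxHeartbeats 1000000 in
theorem Qn_asymptotics (α : ℝ) (hα0 : 0 < α) (hα1 : α < 1) :
    ∃ c C : ℝ, 0 < c ∧ 0 < C ∧ ∃ N₀ : ℕ, ∀ n : ℕ, N₀ ≤ n →
      c * (n : ℝ) ^ ((2 : ℝ) / 3) ≤ (Qn α n : ℝ) ∧
      (Qn α n : ℝ) ≤ C * (n : ℝ) ^ ((2 : ℝ) / 3) ∧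
      (n : ℝ) - (∑ j ∈ Finset.Icc 1 (Qn α n), (blockLen j : ℝ))
        ≤ C * (n : ℝ) ^ ((α + 2) / 3) := by
  refine ⟨1/4, 30, by norm_num, by norm_num, 2 ^ 30, fun n hn => ?_⟩
  have hxbig : ((2:ℝ) ^ (30:ℕ)) ≤ (n:ℝ) := by exact_mod_cast hn
  have hx1 : (1 : ℝ) ≤ (n:ℝ) := le_trans (by norm_num) hxbig
  have hx0 : (0 : ℝ) < (n:ℝ) := by linarith
  -- basic rpow facts
  have h23_1 : (1 : ℝ) ≤ (n:ℝ) ^ ((2:ℝ)/3) := Real.one_le_rpow hx1 (by norm_num)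
  have h23_16 : (16 : ℝ) ≤ (n:ℝ) ^ ((2:ℝ)/3) := by
    calc (16 : ℝ) = ((2:ℝ) ^ (6:ℕ)) ^ ((2:ℝ)/3) := by
          rw [rpow_base_pow (by norm_num) 6 ((2:ℝ)/3) 4 (by norm_num)]; norm_num
      _ ≤ (n:ℝ) ^ ((2:ℝ)/3) :=
          Real.rpow_le_rpow (by norm_num) (le_trans (by norm_num) hxbig) (by norm_num)
  have h13_9 : (9 : ℝ) ≤ (n:ℝ) ^ ((1:ℝ)/3) := by
    calc (9 : ℝ) ≤ ((2:ℝ) ^ (30:ℕ)) ^ ((1:ℝ)/3) := by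
          rw [rpow_base_pow (by norm_num) 30 ((1:ℝ)/3) 10 (by norm_num)]; norm_num
      _ ≤ (n:ℝ) ^ ((1:ℝ)/3) := Real.rpow_le_rpow (by positivity) hxbig (by norm_num)
  have hsplitx : (n:ℝ) ^ ((1:ℝ)/3) * (n:ℝ) ^ ((2:ℝ)/3) = (n:ℝ) := by
    rw [← Real.rpow_add hx0]; norm_num
  have hQn_eq : Qn α n = Nat.findGreatest (fun Q => blockSum α Q ≤ n) n := rfl
  -- PART 1 : lower bound
  set m : ℕ := ⌊((n:ℝ)/2) ^ ((2:ℝ)/3)⌋₊ with hmdef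
  have hm_le : (m : ℝ) ≤ ((n:ℝ)/2) ^ ((2:ℝ)/3) := Nat.floor_le (by positivity)
  have hhalf : (n:ℝ) ^ ((2:ℝ)/3) / 2 ≤ ((n:ℝ)/2) ^ ((2:ℝ)/3) := by
    rw [Real.div_rpow (le_of_lt hx0) (by norm_num)]
    have h2 : ((2:ℝ)) ^ ((2:ℝ)/3) ≤ 2 := by
      calc ((2:ℝ)) ^ ((2:ℝ)/3) ≤ (2:ℝ) ^ (1:ℝ) :=
            Real.rpow_le_rpow_of_exponent_le (by norm_num) (by norm_num)
        _ = 2 := Real.rpow_one 2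
    have hpos : (0:ℝ) < (2:ℝ) ^ ((2:ℝ)/3) := by positivity
    have hx23 : (0:ℝ) ≤ (n:ℝ) ^ ((2:ℝ)/3) := by positivity
    exact div_le_div_of_nonneg_left hx23 hpos h2
  have hmn : m ≤ n := by
    have h : (m : ℝ) ≤ (n:ℝ) := by
      calc (m:ℝ) ≤ ((n:ℝ)/2) ^ ((2:ℝ)/3) := hm_le
        _ ≤ (n:ℝ) ^ ((2:ℝ)/3) :=
            Real.rpow_le_rpow (by positivity) (by linarith) (by norm_num)
        _ ≤ (n:ℝ) ^ (1:ℝ) := Real.rpow_le_rpow_of_exponent_le hx1 (by norm_num)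
        _ = (n:ℝ) := Real.rpow_one _
    exact_mod_cast h
  have hblockm : blockSum α m ≤ n := by
    have hreal : (blockSum α m : ℝ) ≤ (n:ℝ) := by
      have h1 : (blockSum α m : ℝ) ≤ 2 * ((m:ℝ) * (Nat.sqrt m : ℝ)) := by
        have := blockSum_le (le_of_lt hα1) m
        exact_mod_cast this
      have h2 : (Nat.sqrt m : ℝ) ≤ ((n:ℝ)/2) ^ ((1:ℝ)/3) := by
        calc (Nat.sqrt m : ℝ) ≤ Real.sqrt m := Real.nat_sqrt_le_real_sqrt
          _ ≤ Real.sqrt (((n:ℝ)/2) ^ ((2:ℝ)/3)) := Real.sqrt_le_sqrt hm_le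
          _ = ((n:ℝ)/2) ^ ((1:ℝ)/3) := by
            rw [Real.sqrt_eq_rpow, ← Real.rpow_mul (by positivity)]
            norm_num
      have h3 : ((n:ℝ)/2) ^ ((2:ℝ)/3) * ((n:ℝ)/2) ^ ((1:ℝ)/3) = (n:ℝ)/2 := by
        rw [← Real.rpow_add (by positivity)]; norm_num
      have h23p : (0:ℝ) ≤ ((n:ℝ)/2) ^ ((2:ℝ)/3) := by positivity
      calc (blockSum α m : ℝ) ≤ 2 * ((m:ℝ) * (Nat.sqrt m : ℝ)) := h1
        _ ≤ 2 * (((n:ℝ)/2) ^ ((2:ℝ)/3) * ((n:ℝ)/2) ^ ((1:ℝ)/3)) := by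
            have := mul_le_mul hm_le h2 (Nat.cast_nonneg _) h23p
            linarith
        _ = (n:ℝ) := by rw [h3]; ring
    exact_mod_cast hreal
  have hlow : m ≤ Qn α n := by
    rw [hQn_eq]; exact Nat.le_findGreatest hmn hblockm
  have claim1 : 1/4 * (n:ℝ) ^ ((2:ℝ)/3) ≤ (Qn α n : ℝ) := by
    have hfloor : ((n:ℝ)/2) ^ ((2:ℝ)/3) < (m:ℝ) + 1 := Nat.lt_floor_add_one _
    have hQm : (m : ℝ) ≤ (Qn α n : ℝ) := by exact_mod_cast hlow
    linarith
  -- PART 2 : upper bound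
  have hQb : blockSum α (Qn α n) ≤ n := by
    rw [hQn_eq]
    exact Nat.findGreatest_spec (P := fun Q => blockSum α Q ≤ n) (m := 0)
      (Nat.zero_le n) (show blockSum α 0 ≤ n by rw [blockSum_zero]; exact Nat.zero_le n)
  have claim2 : (Qn α n : ℝ) ≤ 8 * (n:ℝ) ^ ((2:ℝ)/3) := by
    by_cases hq : Qn α n < 16
    · have h : (Qn α n : ℝ) ≤ 16 := by exact_mod_cast le_of_lt hq
      linarith
    · push_neg at hq
      have hq16 : (16:ℝ) ≤ (Qn α n : ℝ) := by exact_mod_cast hq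
      have hq0 : (0:ℝ) ≤ (Qn α n : ℝ) := by positivity
      have hbs : (blockSum α (Qn α n) : ℝ) ≤ (n:ℝ) := by exact_mod_cast hQb
      have hge := blockSum_ge_real α hq
      have hkey : (Qn α n : ℝ) * Real.sqrt (Qn α n) ≤ 16 * (n:ℝ) := by
        have h := le_trans hge hbs
        linarith
      have hsq : (Real.sqrt (Qn α n)) ^ 2 = (Qn α n : ℝ) := Real.sq_sqrt hq0
      have hcube : (Qn α n : ℝ) ^ 3 ≤ 256 * (n:ℝ) ^ 2 := by
        have h2 : ((Qn α n : ℝ) * Real.sqrt (Qn α n)) ^ 2 ≤ (16 * (n:ℝ)) ^ 2 := by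
          apply pow_le_pow_left₀ (by positivity) hkey
        have h3 : ((Qn α n : ℝ) * Real.sqrt (Qn α n)) ^ 2 = (Qn α n : ℝ) ^ 3 := by
          rw [mul_pow, hsq]; ring
        nlinarith [h2, h3]
      have hrhs : (8 * (n:ℝ) ^ ((2:ℝ)/3)) ^ 3 = 512 * (n:ℝ) ^ 2 := by
        rw [mul_pow]
        have h : ((n:ℝ) ^ ((2:ℝ)/3)) ^ (3:ℕ) = (n:ℝ) ^ (2:ℕ) := by
          rw [← Real.rpow_natCast ((n:ℝ) ^ ((2:ℝ)/3)) 3, ← Real.rpow_mul (le_of_lt hx0),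
            ← Real.rpow_natCast (n:ℝ) 2]
          norm_num
        rw [h]; norm_num
      have h : (Qn α n : ℝ) ^ 3 ≤ (8 * (n:ℝ) ^ ((2:ℝ)/3)) ^ 3 := by
        rw [hrhs]; nlinarith [sq_nonneg (n:ℝ), hx0]
      exact le_of_pow_le_pow_left₀ (by norm_num) (by positivity) h
  -- PART 3 : remainder
  have hKn : Qn α n + 1 ≤ n := by
    have h : (Qn α n : ℝ) + 1 ≤ (n:ℝ) := by
      calc (Qn α n : ℝ) + 1 ≤ 8 * (n:ℝ) ^ ((2:ℝ)/3) + 1 := by linarith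
        _ ≤ 9 * (n:ℝ) ^ ((2:ℝ)/3) := by linarith
        _ ≤ (n:ℝ) ^ ((1:ℝ)/3) * (n:ℝ) ^ ((2:ℝ)/3) := by nlinarith
        _ = (n:ℝ) := hsplitx
    exact_mod_cast h
  have hgt : n < blockSum α (Qn α n + 1) := by
    by_contra hcon
    push_neg at hcon
    have h := Nat.le_findGreatest (P := fun Q => blockSum α Q ≤ n) hKn hcon
    rw [← hQn_eq] at h
    omega
  have hK1 : (1:ℝ) ≤ ((Qn α n + 1 : ℕ) : ℝ) := by exact_mod_cast Nat.one_le_iff_ne_zero.2 (by omega)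
  have hKpos : (0:ℝ) < ((Qn α n + 1 : ℕ) : ℝ) := by linarith
  have hbound : (blockSum α (Qn α n + 1) : ℝ) ≤
      (∑ j ∈ Finset.Icc 1 (Qn α n), (blockLen j : ℝ))
      + ((Qn α n + 1 : ℕ) : ℝ) * ((Qn α n + 1 : ℕ) : ℝ) ^ (α/2)
      + Real.sqrt ((Qn α n + 1 : ℕ) : ℝ) := by
    have hsum : (blockSum α (Qn α n + 1) : ℝ)
        = ∑ j ∈ Finset.Icc 1 (Qn α n + 1), ((blockLen j : ℝ) + (gapLen α j : ℝ)) := by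
      simp [blockSum]
    rw [hsum, Finset.sum_Icc_succ_top (by omega : 1 ≤ Qn α n + 1)]
    have hgapsum : ∑ j ∈ Finset.Icc 1 (Qn α n), ((blockLen j : ℝ) + (gapLen α j : ℝ))
        ≤ (∑ j ∈ Finset.Icc 1 (Qn α n), (blockLen j : ℝ))
          + (Qn α n : ℝ) * ((Qn α n + 1 : ℕ) : ℝ) ^ (α/2) := by
      rw [Finset.sum_add_distrib]
      have h : ∑ j ∈ Finset.Icc 1 (Qn α n), (gapLen α j : ℝ)
          ≤ ∑ _j ∈ Finset.Icc 1 (Qn α n), ((Qn α n + 1 : ℕ) : ℝ) ^ (α/2) := by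
        apply Finset.sum_le_sum
        intro j hj
        simp only [Finset.mem_Icc] at hj
        exact gapLen_le_rpow (le_of_lt hα0) (by omega)
      rw [Finset.sum_const, Nat.card_Icc, Nat.add_sub_cancel, nsmul_eq_mul] at h
      linarith
    have hlast1 : (blockLen (Qn α n + 1) : ℝ) ≤ Real.sqrt ((Qn α n + 1 : ℕ) : ℝ) :=
      Real.nat_sqrt_le_real_sqrt
    have hlast2 : (gapLen α (Qn α n + 1) : ℝ) ≤ ((Qn α n + 1 : ℕ) : ℝ) ^ (α/2) :=
      gapLen_le_rpow (le_of_lt hα0) le_rfl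
    have hring : (Qn α n : ℝ) * ((Qn α n + 1 : ℕ) : ℝ) ^ (α/2)
        + ((Qn α n + 1 : ℕ) : ℝ) ^ (α/2)
        = ((Qn α n + 1 : ℕ) : ℝ) * ((Qn α n + 1 : ℕ) : ℝ) ^ (α/2) := by
      push_cast; ring
    linarith
  have hy : ((Qn α n + 1 : ℕ) : ℝ) ≤ 9 * (n:ℝ) ^ ((2:ℝ)/3) := by
    push_cast; linarith
  have hy0 : (0:ℝ) < 9 * (n:ℝ) ^ ((2:ℝ)/3) := by positivity
  have hKKa : ((Qn α n + 1 : ℕ) : ℝ) * ((Qn α n + 1 : ℕ) : ℝ) ^ (α/2)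
      ≤ (9 * (n:ℝ) ^ ((2:ℝ)/3)) * (9 * (n:ℝ) ^ ((2:ℝ)/3)) ^ (α/2) :=
    mul_le_mul hy (Real.rpow_le_rpow (le_of_lt hKpos) hy (by positivity))
      (by positivity) (le_of_lt hy0)
  have hy_pow : (9 * (n:ℝ) ^ ((2:ℝ)/3)) * (9 * (n:ℝ) ^ ((2:ℝ)/3)) ^ (α/2)
      ≤ 27 * (n:ℝ) ^ ((α+2)/3) := by
    have h1 : (9 * (n:ℝ) ^ ((2:ℝ)/3)) * (9 * (n:ℝ) ^ ((2:ℝ)/3)) ^ (α/2)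
        = (9 * (n:ℝ) ^ ((2:ℝ)/3)) ^ (1 + α/2) := by
      rw [Real.rpow_add hy0, Real.rpow_one]
    have h2 : (9 * (n:ℝ) ^ ((2:ℝ)/3)) ^ (1 + α/2)
        = (9:ℝ) ^ (1 + α/2) * ((n:ℝ) ^ ((2:ℝ)/3)) ^ (1 + α/2) :=
      Real.mul_rpow (by norm_num) (by positivity)
    have h3 : (9:ℝ) ^ (1 + α/2) ≤ 27 := by
      calc (9:ℝ) ^ (1 + α/2) ≤ (9:ℝ) ^ ((3:ℝ)/2) :=
            Real.rpow_le_rpow_of_exponent_le (by norm_num) (by linarith)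
        _ = 27 := by
            rw [show (9:ℝ) = 3 ^ (2:ℕ) by norm_num,
              rpow_base_pow (by norm_num) 2 ((3:ℝ)/2) 3 (by norm_num)]
            norm_num
    have h4 : ((n:ℝ) ^ ((2:ℝ)/3)) ^ (1 + α/2) = (n:ℝ) ^ ((α+2)/3) := by
      rw [← Real.rpow_mul (le_of_lt hx0)]
      ring_nf
    have h5 : (0:ℝ) ≤ ((n:ℝ) ^ ((2:ℝ)/3)) ^ (1 + α/2) := by positivity
    calc (9 * (n:ℝ) ^ ((2:ℝ)/3)) * (9 * (n:ℝ) ^ ((2:ℝ)/3)) ^ (α/2)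
        = (9:ℝ) ^ (1 + α/2) * ((n:ℝ) ^ ((2:ℝ)/3)) ^ (1 + α/2) := by rw [h1, h2]
      _ ≤ 27 * ((n:ℝ) ^ ((2:ℝ)/3)) ^ (1 + α/2) := by nlinarith
      _ = 27 * (n:ℝ) ^ ((α+2)/3) := by rw [h4]
  have hsqK : Real.sqrt ((Qn α n + 1 : ℕ) : ℝ) ≤ 3 * (n:ℝ) ^ ((α+2)/3) := by
    have h1 : Real.sqrt ((Qn α n + 1 : ℕ) : ℝ) ≤ Real.sqrt (9 * (n:ℝ) ^ ((2:ℝ)/3)) :=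
      Real.sqrt_le_sqrt hy
    have h2 : Real.sqrt (9 * (n:ℝ) ^ ((2:ℝ)/3)) = 3 * (n:ℝ) ^ ((1:ℝ)/3) := by
      rw [show (9:ℝ) * (n:ℝ) ^ ((2:ℝ)/3) = (3 * (n:ℝ) ^ ((1:ℝ)/3)) ^ 2 by
        rw [mul_pow, ← Real.rpow_natCast ((n:ℝ) ^ ((1:ℝ)/3)) 2,
          ← Real.rpow_mul (le_of_lt hx0)]
        norm_num]
      exact Real.sqrt_sq (by positivity)
    have h3 : (n:ℝ) ^ ((1:ℝ)/3) ≤ (n:ℝ) ^ ((α+2)/3) :=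
      Real.rpow_le_rpow_of_exponent_le hx1 (by linarith)
    linarith
  have claim3 : (n:ℝ) - (∑ j ∈ Finset.Icc 1 (Qn α n), (blockLen j : ℝ))
      ≤ 30 * (n:ℝ) ^ ((α+2)/3) := by
    have hgtR : (n:ℝ) < (blockSum α (Qn α n + 1) : ℝ) := by exact_mod_cast hgt
    linarith
  exact ⟨claim1, by linarith [h23_1], claim3⟩
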